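/- If the true distribution p(·; θ) is a strictly positive member of the exponential family with clique-indicator features, and μ̄_N are estimated marginals converging in probability to the true marginals μ (which lie in the interior of the marginal polytope), then any sequence of distributions p(·; θ̂_N) in the family with marginals matching μ̄_N converges in probability to p(·; θ) pointwise. -/

import Mathlib

open MeasureTheory Real Matrix Filter

variable {T : ℕ} {𝒳 : Type*} [Fintype 𝒳] [DecidableEq 𝒳]

/-- Index set for clique-indicator features. -/
def CliqueConfig (𝒞 : Finset (Finset (Fin T))) (𝒳 : Type*) :=
  Σ C : ↥𝒞, (↥(C.1) → 𝒳)

instance (𝒞 : Finset (Finset (Fin T))) : Fintype (CliqueConfig 𝒞 𝒳) := by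
  unfold CliqueConfig; infer_instance

/-- The clique-indicator feature map `φ(x)_{C, i_C} = 𝟙{x_C = i_C}`. -/
def cliqueFeatures (𝒞 : Finset (Finset (Fin T))) (x : Fin T → 𝒳) :
    CliqueConfig 𝒞 𝒳 → ℝ
  | ⟨C, i⟩ => if ∀ t : ↥(C : Finset (Fin T)), x ↑t = i t then 1 else 0

/-- The exponential family density `p(x; θ) = exp(θᵀφ(x) − A(θ))`. -/
noncomputable def expFamDensity (𝒞 : Finset (Finset (Fin T)))
    (θ : CliqueConfig 𝒞 𝒳 → ℝ) (x : Fin T → 𝒳) : ℝ :=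
  exp (θ ⬝ᵥ cliqueFeatures 𝒞 x
    - Real.log (∑ x' : Fin T → 𝒳, exp (θ ⬝ᵥ cliqueFeatures 𝒞 x')))

/-- The model marginals (feature expectations) of `p(·; θ)`. -/
noncomputable def modelMarginals (𝒞 : Finset (Finset (Fin T)))
    (θ : CliqueConfig 𝒞 𝒳 → ℝ) : CliqueConfig 𝒞 𝒳 → ℝ :=
  fun j => ∑ x : Fin T → 𝒳, expFamDensity 𝒞 θ x * cliqueFeatures 𝒞 x j

section AuxLemmas
variable (𝒞 : Finset (Finset (Fin T)))

lemma aux_Zpos [Nonempty 𝒳] (θ : CliqueConfig 𝒞 𝒳 → ℝ) :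
    0 < ∑ x' : Fin T → 𝒳, exp (θ ⬝ᵥ cliqueFeatures 𝒞 x') :=
  Finset.sum_pos (fun x _ => exp_pos _) Finset.univ_nonempty

lemma aux_density_pos (θ : CliqueConfig 𝒞 𝒳 → ℝ) (x : Fin T → 𝒳) :
    0 < expFamDensity 𝒞 θ x := exp_pos _

lemma aux_density_sum [Nonempty 𝒳] (θ : CliqueConfig 𝒞 𝒳 → ℝ) :
    ∑ x : Fin T → 𝒳, expFamDensity 𝒞 θ x = 1 := by
  have hZ := aux_Zpos 𝒞 θ
  simp_rw [expFamDensity, exp_sub, exp_log hZ]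
  rw [← Finset.sum_div, div_self hZ.ne']

lemma aux_sum_mul_log_density (θ : CliqueConfig 𝒞 𝒳 → ℝ) (q : (Fin T → 𝒳) → ℝ)
    (hq1 : ∑ x, q x = 1) :
    ∑ x, q x * Real.log (expFamDensity 𝒞 θ x)
      = (∑ j, θ j * (∑ x, q x * cliqueFeatures 𝒞 x j))
        - Real.log (∑ x' : Fin T → 𝒳, exp (θ ⬝ᵥ cliqueFeatures 𝒞 x')) := by
  have hlog : ∀ x, Real.log (expFamDensity 𝒞 θ x)
      = θ ⬝ᵥ cliqueFeatures 𝒞 x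
        - Real.log (∑ x' : Fin T → 𝒳, exp (θ ⬝ᵥ cliqueFeatures 𝒞 x')) := by
    intro x; rw [expFamDensity, Real.log_exp]
  simp_rw [hlog, mul_sub, Finset.sum_sub_distrib, ← Finset.sum_mul, hq1, one_mul]
  congr 1
  simp_rw [dotProduct, Finset.mul_sum]
  rw [Finset.sum_comm]
  exact Finset.sum_congr rfl fun j _ => Finset.sum_congr rfl fun x _ => by ring

lemma aux_gibbs_term (p q : (Fin T → 𝒳) → ℝ) (hp : ∀ x, 0 < p x) (hq : ∀ x, 0 ≤ q x)
    (x : Fin T → 𝒳) :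
    q x * Real.log (p x) - q x * Real.log (q x) ≤ p x - q x := by
  rcases eq_or_lt_of_le (hq x) with h | h
  · simp [← h, (hp x).le]
  · have hl := Real.log_le_sub_one_of_pos (div_pos (hp x) h)
    rw [Real.log_div (hp x).ne' h.ne'] at hl
    have := mul_le_mul_of_nonneg_left hl h.le
    rw [mul_sub] at this
    rw [mul_sub (q x)] at this
    have h2 : q x * (p x / q x) = p x := by field_simp
    nlinarith

lemma aux_gibbs_le (p q : (Fin T → 𝒳) → ℝ) (hp : ∀ x, 0 < p x) (hq : ∀ x, 0 ≤ q x)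
    (hp1 : ∑ x, p x = 1) (hq1 : ∑ x, q x = 1) :
    ∑ x, q x * Real.log (p x) ≤ ∑ x, q x * Real.log (q x) := by
  have h1 : ∑ x, (q x * Real.log (p x) - q x * Real.log (q x)) ≤ ∑ x, (p x - q x) :=
    Finset.sum_le_sum fun x _ => aux_gibbs_term p q hp hq x
  rw [Finset.sum_sub_distrib, Finset.sum_sub_distrib, hp1, hq1] at h1
  linarith

lemma aux_gibbs_eq (p q : (Fin T → 𝒳) → ℝ) (hp : ∀ x, 0 < p x) (hq : ∀ x, 0 ≤ q x)
    (hp1 : ∑ x, p x = 1) (hq1 : ∑ x, q x = 1)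
    (heq : ∑ x, q x * Real.log (p x) = ∑ x, q x * Real.log (q x)) : q = p := by
  have hz : ∑ x, ((p x - q x) - (q x * Real.log (p x) - q x * Real.log (q x))) = 0 := by
    simp_rw [Finset.sum_sub_distrib]
    rw [hp1, hq1, heq]; ring
  have hall := (Finset.sum_eq_zero_iff_of_nonneg
    (fun x _ => sub_nonneg.2 (aux_gibbs_term p q hp hq x))).1 hz
  funext x
  have hx := hall x (Finset.mem_univ x)
  rcases eq_or_lt_of_le (hq x) with h | h
  · exfalso
    rw [← h] at hx
    simp at hx
    exact absurd hx.symm (hp x).ne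
  · by_contra hne
    have hne' : p x / q x ≠ 1 := by
      intro hcon
      exact hne ((div_eq_one_iff_eq h.ne').1 hcon).symm
    have hl := Real.log_lt_sub_one_of_pos (div_pos (hp x) h) hne'
    rw [Real.log_div (hp x).ne' h.ne'] at hl
    have := mul_lt_mul_of_pos_left hl h
    have h2 : q x * (p x / q x) = p x := by field_simp
    nlinarith

lemma aux_sum_mul_log_eq [Nonempty 𝒳] (θ : CliqueConfig 𝒞 𝒳 → ℝ) (q : (Fin T → 𝒳) → ℝ)
    (hq1 : ∑ x, q x = 1)
    (hmean : ∀ j, ∑ x, q x * cliqueFeatures 𝒞 x j = modelMarginals 𝒞 θ j) :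
    ∑ x, q x * Real.log (expFamDensity 𝒞 θ x)
      = ∑ x, expFamDensity 𝒞 θ x * Real.log (expFamDensity 𝒞 θ x) := by
  rw [aux_sum_mul_log_density 𝒞 θ q hq1,
    aux_sum_mul_log_density 𝒞 θ _ (aux_density_sum 𝒞 θ)]
  congr 1
  exact Finset.sum_congr rfl fun j _ => by rw [hmean j]; rfl

lemma aux_maxent [Nonempty 𝒳] (θ : CliqueConfig 𝒞 𝒳 → ℝ) (r : (Fin T → 𝒳) → ℝ)
    (hr0 : ∀ x, 0 ≤ r x) (hr1 : ∑ x, r x = 1)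
    (hmean : ∀ j, ∑ x, r x * cliqueFeatures 𝒞 x j = modelMarginals 𝒞 θ j) :
    ∑ x, expFamDensity 𝒞 θ x * Real.log (expFamDensity 𝒞 θ x)
      ≤ ∑ x, r x * Real.log (r x) := by
  have h1 := aux_gibbs_le (expFamDensity 𝒞 θ) r (aux_density_pos 𝒞 θ) hr0
    (aux_density_sum 𝒞 θ) hr1
  rw [aux_sum_mul_log_eq 𝒞 θ r hr1 hmean] at h1
  exact h1

lemma aux_unique_maxent [Nonempty 𝒳] (θ : CliqueConfig 𝒞 𝒳 → ℝ) (q : (Fin T → 𝒳) → ℝ)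
    (hq0 : ∀ x, 0 ≤ q x) (hq1 : ∑ x, q x = 1)
    (hmean : ∀ j, ∑ x, q x * cliqueFeatures 𝒞 x j = modelMarginals 𝒞 θ j)
    (hH : ∑ x, q x * Real.log (q x)
      ≤ ∑ x, expFamDensity 𝒞 θ x * Real.log (expFamDensity 𝒞 θ x)) :
    q = expFamDensity 𝒞 θ := by
  have h1 := aux_sum_mul_log_eq 𝒞 θ q hq1 hmean
  have h2 := aux_gibbs_le (expFamDensity 𝒞 θ) q (aux_density_pos 𝒞 θ) hq0
    (aux_density_sum 𝒞 θ) hq1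
  exact aux_gibbs_eq (expFamDensity 𝒞 θ) q (aux_density_pos 𝒞 θ) hq0
    (aux_density_sum 𝒞 θ) hq1 (by linarith)

end AuxLemmas

lemma key_continuity [Nonempty 𝒳] (𝒞 : Finset (Finset (Fin T)))
    (θ : CliqueConfig 𝒞 𝒳 → ℝ) (x : Fin T → 𝒳) {η : ℝ} (hη : 0 < η) :
    ∃ δ : ℝ, 0 < δ ∧ ∀ θ' : CliqueConfig 𝒞 𝒳 → ℝ,
      ‖modelMarginals 𝒞 θ' - modelMarginals 𝒞 θ‖ < δ →
      |expFamDensity 𝒞 θ' x - expFamDensity 𝒞 θ x| < η := by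
  by_contra hcon
  push_neg at hcon
  choose θseq hθ1 hθ2 using fun n : ℕ => hcon (1 / ((n : ℝ) + 1)) (by positivity)
  -- marginals of the sequence converge to those of θ
  have hMconv : Tendsto (fun n => modelMarginals 𝒞 (θseq n)) atTop
      (nhds (modelMarginals 𝒞 θ)) := by
    rw [tendsto_iff_norm_sub_tendsto_zero]
    exact squeeze_zero (fun n => norm_nonneg _) (fun n => (hθ1 n).le)
      tendsto_one_div_add_atTop_nhds_zero_nat
  -- compactness of the simplex : extract a convergent subsequence of densities
  have hmem : ∀ n, expFamDensity 𝒞 (θseq n) ∈ Set.Icc (0 : (Fin T → 𝒳) → ℝ) 1 := by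
    intro n
    constructor
    · intro x'; exact (aux_density_pos 𝒞 (θseq n) x').le
    · intro x'
      calc expFamDensity 𝒞 (θseq n) x'
          ≤ ∑ y : Fin T → 𝒳, expFamDensity 𝒞 (θseq n) y :=
            Finset.single_le_sum (fun y _ => (aux_density_pos 𝒞 (θseq n) y).le)
              (Finset.mem_univ x')
        _ = 1 := aux_density_sum 𝒞 (θseq n)
  obtain ⟨q, hqmem, ψ, hψmono, hψ⟩ :=
    (isCompact_Icc (a := (0 : (Fin T → 𝒳) → ℝ)) (b := 1)).tendsto_subseq hmem
  have hqpt : ∀ x', Tendsto (fun n => expFamDensity 𝒞 (θseq (ψ n)) x') atTop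
      (nhds (q x')) := tendsto_pi_nhds.1 hψ
  have hq0 : ∀ x', 0 ≤ q x' := fun x' => hqmem.1 x'
  have hq1 : ∑ x', q x' = 1 := by
    have h1 : Tendsto (fun n => ∑ x', expFamDensity 𝒞 (θseq (ψ n)) x') atTop
        (nhds (∑ x', q x')) := tendsto_finset_sum _ fun x' _ => hqpt x'
    have h2 : (fun n => ∑ x', expFamDensity 𝒞 (θseq (ψ n)) x') = fun _ => (1 : ℝ) :=
      funext fun n => aux_density_sum 𝒞 (θseq (ψ n))
    rw [h2] at h1
    exact tendsto_nhds_unique h1 tendsto_const_nhds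
  have hqmean : ∀ j, ∑ x', q x' * cliqueFeatures 𝒞 x' j = modelMarginals 𝒞 θ j := by
    intro j
    have h1 : Tendsto (fun n => ∑ x', expFamDensity 𝒞 (θseq (ψ n)) x' * cliqueFeatures 𝒞 x' j)
        atTop (nhds (∑ x', q x' * cliqueFeatures 𝒞 x' j)) :=
      tendsto_finset_sum _ fun x' _ => (hqpt x').mul_const _
    have h2 : Tendsto (fun n => modelMarginals 𝒞 (θseq (ψ n)) j) atTop
        (nhds (modelMarginals 𝒞 θ j)) :=
      (tendsto_pi_nhds.1 hMconv j).comp hψmono.tendsto_atTop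
    exact tendsto_nhds_unique h1 h2
  -- linear map (total mass, means)
  let Lmap : ((Fin T → 𝒳) → ℝ) →ₗ[ℝ] ℝ × (CliqueConfig 𝒞 𝒳 → ℝ) :=
    { toFun := fun c => (∑ x', c x', fun j => ∑ x', c x' * cliqueFeatures 𝒞 x' j)
      map_add' := by
        intro a b
        refine Prod.ext ?_ (funext fun j => ?_) <;>
          simp [Finset.sum_add_distrib, add_mul]
      map_smul' := by
        intro m a
        refine Prod.ext ?_ (funext fun j => ?_) <;>
          simp [Finset.mul_sum, mul_assoc] }
  obtain ⟨S, hS⟩ := LinearMap.exists_rightInverse_of_surjective Lmap.rangeRestrict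
    (LinearMap.range_eq_top.2 Lmap.surjective_rangeRestrict)
  have hSlift : ∀ w : LinearMap.range Lmap, Lmap (S w) = (w : ℝ × (CliqueConfig 𝒞 𝒳 → ℝ)) := by
    intro w
    exact congrArg Subtype.val (LinearMap.ext_iff.1 hS w)
  have hScont : Continuous S := S.continuous_of_finiteDimensional
  have hWmem : ∀ n, ((0 : ℝ), modelMarginals 𝒞 (θseq n) - modelMarginals 𝒞 θ)
      ∈ LinearMap.range Lmap := by
    intro n
    refine ⟨expFamDensity 𝒞 (θseq n) - expFamDensity 𝒞 θ, ?_⟩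
    refine Prod.ext ?_ (funext fun j => ?_)
    · show ∑ x', (expFamDensity 𝒞 (θseq n) x' - expFamDensity 𝒞 θ x') = 0
      rw [Finset.sum_sub_distrib, aux_density_sum, aux_density_sum]; ring
    · show ∑ x', (expFamDensity 𝒞 (θseq n) x' - expFamDensity 𝒞 θ x') * cliqueFeatures 𝒞 x' j
        = modelMarginals 𝒞 (θseq n) j - modelMarginals 𝒞 θ j
      simp_rw [sub_mul, Finset.sum_sub_distrib]
      rfl
  let w : ℕ → LinearMap.range Lmap := fun n => ⟨_, hWmem n⟩
  have hwconv : Tendsto w atTop (nhds 0) := by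
    rw [tendsto_subtype_rng]
    have h1 : Tendsto (fun n => modelMarginals 𝒞 (θseq n) - modelMarginals 𝒞 θ) atTop
        (nhds 0) := by
      have := hMconv.sub (tendsto_const_nhds (x := modelMarginals 𝒞 θ))
      rwa [sub_self] at this
    exact tendsto_const_nhds.prodMk_nhds h1
  -- the competitor distributions
  let r : ℕ → (Fin T → 𝒳) → ℝ := fun n => expFamDensity 𝒞 θ + S (w n)
  have hrconv : Tendsto r atTop (nhds (expFamDensity 𝒞 θ)) := by
    have h0 : Tendsto (fun n => S (w n)) atTop (nhds (S 0)) :=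
      (hScont.tendsto 0).comp hwconv
    rw [map_zero] at h0
    have := tendsto_const_nhds (x := expFamDensity 𝒞 θ) (f := atTop (α := ℕ)) |>.add h0
    rwa [add_zero] at this
  have hrpt : ∀ x', Tendsto (fun n => r n x') atTop (nhds (expFamDensity 𝒞 θ x')) :=
    tendsto_pi_nhds.1 hrconv
  have hrsum : ∀ n, ∑ x', r n x' = 1 := by
    intro n
    have h1 : ∑ x', (S (w n)) x' = 0 := congrArg Prod.fst (hSlift (w n))
    show ∑ x', (expFamDensity 𝒞 θ x' + (S (w n)) x') = 1
    rw [Finset.sum_add_distrib, aux_density_sum, h1, add_zero]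
  have hrmean : ∀ n j, ∑ x', r n x' * cliqueFeatures 𝒞 x' j
      = modelMarginals 𝒞 (θseq n) j := by
    intro n j
    have h2 : (fun j => ∑ x', (S (w n)) x' * cliqueFeatures 𝒞 x' j)
        = modelMarginals 𝒞 (θseq n) - modelMarginals 𝒞 θ :=
      congrArg Prod.snd (hSlift (w n))
    have h2j := congrFun h2 j
    show ∑ x', (expFamDensity 𝒞 θ x' + (S (w n)) x') * cliqueFeatures 𝒞 x' j
        = modelMarginals 𝒞 (θseq n) j
    simp_rw [add_mul, Finset.sum_add_distrib, h2j]
    show modelMarginals 𝒞 θ j + (modelMarginals 𝒞 (θseq n) j - modelMarginals 𝒞 θ j) = _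
    ring
  have hrpos : ∀ᶠ n in atTop, ∀ x', 0 ≤ r n x' := by
    rw [eventually_all]
    intro x'
    have h1 : ∀ᶠ y in nhds (expFamDensity 𝒞 θ x'), 0 < y :=
      eventually_gt_nhds (aux_density_pos 𝒞 θ x')
    exact ((hrpt x').eventually h1).mono fun n hn => hn.le
  have hent : ∀ᶠ n in atTop,
      ∑ x', expFamDensity 𝒞 (θseq n) x' * Real.log (expFamDensity 𝒞 (θseq n) x')
        ≤ ∑ x', r n x' * Real.log (r n x') :=
    hrpos.mono fun n hn => aux_maxent 𝒞 (θseq n) (r n) hn (hrsum n) (hrmean n)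
  have hA : Tendsto (fun n => ∑ x', expFamDensity 𝒞 (θseq (ψ n)) x'
      * Real.log (expFamDensity 𝒞 (θseq (ψ n)) x')) atTop
      (nhds (∑ x', q x' * Real.log (q x'))) :=
    tendsto_finset_sum _ fun x' _ => (Real.continuous_mul_log.tendsto _).comp (hqpt x')
  have hB : Tendsto (fun n => ∑ x', r (ψ n) x' * Real.log (r (ψ n) x')) atTop
      (nhds (∑ x', expFamDensity 𝒞 θ x' * Real.log (expFamDensity 𝒞 θ x'))) :=
    (tendsto_finset_sum _ fun x' _ =>
      (Real.continuous_mul_log.tendsto _).comp (hrpt x')).comp hψmono.tendsto_atTop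
  have hle : ∑ x', q x' * Real.log (q x')
      ≤ ∑ x', expFamDensity 𝒞 θ x' * Real.log (expFamDensity 𝒞 θ x') :=
    le_of_tendsto_of_tendsto hA hB (hψmono.tendsto_atTop.eventually hent)
  have hq_eq : q = expFamDensity 𝒞 θ := aux_unique_maxent 𝒞 θ q hq0 hq1 hqmean hle
  have hfar : η ≤ |q x - expFamDensity 𝒞 θ x| := by
    have h1 : Tendsto (fun n => |expFamDensity 𝒞 (θseq (ψ n)) x - expFamDensity 𝒞 θ x|)
        atTop (nhds (|q x - expFamDensity 𝒞 θ x|)) :=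
      (continuous_abs.tendsto _).comp ((hqpt x).sub tendsto_const_nhds)
    exact le_of_tendsto_of_tendsto tendsto_const_nhds h1
      (Filter.Eventually.of_forall fun n => hθ2 (ψ n))
  rw [hq_eq] at hfar
  simp at hfar
  linarith

/-- If the estimated marginals `μ̄_N` converge in probability to the true
marginals `μ(θ)` of a strictly positive member `p(·; θ)` of the family (which
lie in the interior of the marginal polytope), then any sequence of family
members `p(·; θ̂_N)` whose marginals match `μ̄_N` converges in probability to
`p(·; θ)` pointwise. -/
theorem learned_distribution_consistent [Nonempty 𝒳]
    (𝒞 : Finset (Finset (Fin T)))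
    {Ω : Type*} [MeasurableSpace Ω] (P : Measure Ω) [IsProbabilityMeasure P]
    (θ : CliqueConfig 𝒞 𝒳 → ℝ)
    (muBar : ℕ → Ω → (CliqueConfig 𝒞 𝒳 → ℝ))
    (hconv : ∀ η : ℝ, 0 < η →
      Tendsto (fun N : ℕ =>
          P {ω | η < ‖muBar N ω - modelMarginals 𝒞 θ‖})
        atTop (nhds 0))
    (θhat : ℕ → Ω → (CliqueConfig 𝒞 𝒳 → ℝ))
    (hmatch : ∀ N ω, modelMarginals 𝒞 (θhat N ω) = muBar N ω) :
    ∀ x : Fin T → 𝒳, ∀ η : ℝ, 0 < η →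
      Tendsto (fun N : ℕ =>
          P {ω | η < |expFamDensity 𝒞 (θhat N ω) x - expFamDensity 𝒞 θ x|})
        atTop (nhds 0) := by
  intro x η hη
  obtain ⟨δ, hδ, hkey⟩ := key_continuity 𝒞 θ x hη
  have hsub : ∀ N, {ω | η < |expFamDensity 𝒞 (θhat N ω) x - expFamDensity 𝒞 θ x|}
      ⊆ {ω | δ / 2 < ‖muBar N ω - modelMarginals 𝒞 θ‖} := by
    intro N ω hω
    simp only [Set.mem_setOf_eq] at hω ⊢
    by_contra hc
    push_neg at hc
    have h1 : ‖modelMarginals 𝒞 (θhat N ω) - modelMarginals 𝒞 θ‖ < δ := by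
      rw [hmatch]; linarith
    exact absurd (hkey _ h1) (not_lt.2 hω.le)
  exact tendsto_of_tendsto_of_tendsto_of_le_of_le tendsto_const_nhds
    (hconv (δ / 2) (by positivity)) (fun N => zero_le)
    (fun N => measure_mono (hsub N))
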